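/- Let p, s, t ∈ ℕ and let A_xx, B_xx be skew-symmetric p×p, A_xs, B_xs be p×s, A_xy, B_xy be p×t, and A_ss, B_ss be skew-symmetric s×s complex matrices, and form A = [[A_xx, A_xs, A_xy],[−A_xsᵀ, A_ss, 0],[−A_xyᵀ, 0, 0]] and B = [[B_xx, B_xs, B_xy],[−B_xsᵀ, B_ss, 0],[−B_xyᵀ, 0, 0]]. Then for every λ ∈ ℂ such that (A_xy + λB_xy)ᵀ has trivial kernel and A_ss + λB_ss is invertible, the kernel of A + λB equals { (u,v,y) ∈ ℂ^p × ℂ^s × ℂ^t : u = 0, v = 0, and (A_xy + λB_xy)·y = 0 }. -/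

import Mathlib

open Matrix

noncomputable section

/-- The skew-symmetric block matrix `[[Xxx, Xxs, Xxy], [-Xxsᵀ, Xss, 0], [-Xxyᵀ, 0, 0]]`. -/
def triMat {p s t : ℕ} (Xxx : Matrix (Fin p) (Fin p) ℂ) (Xxs : Matrix (Fin p) (Fin s) ℂ)
    (Xxy : Matrix (Fin p) (Fin t) ℂ) (Xss : Matrix (Fin s) (Fin s) ℂ) :
    Matrix (Fin p ⊕ (Fin s ⊕ Fin t)) (Fin p ⊕ (Fin s ⊕ Fin t)) ℂ :=
  Matrix.fromBlocks Xxx (Matrix.fromCols Xxs Xxy)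
    (Matrix.fromRows (-Xxsᵀ) (-Xxyᵀ)) (Matrix.fromBlocks Xss 0 0 0)

lemma triMat_add_smul {p s t : ℕ} (Axx Bxx : Matrix (Fin p) (Fin p) ℂ)
    (Axs Bxs : Matrix (Fin p) (Fin s) ℂ) (Axy Bxy : Matrix (Fin p) (Fin t) ℂ)
    (Ass Bss : Matrix (Fin s) (Fin s) ℂ) (lam : ℂ) :
    triMat Axx Axs Axy Ass + lam • triMat Bxx Bxs Bxy Bss =
      triMat (Axx + lam • Bxx) (Axs + lam • Bxs) (Axy + lam • Bxy) (Ass + lam • Bss) := by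
  ext i j
  rcases i with i | i | i <;> rcases j with j | j | j <;>
    simp [triMat, fromBlocks, fromCols, fromRows_apply_inl, fromRows_apply_inr, transpose, mul_add] <;> ring

/-- For regular values `λ`, the kernel of `A + λ B` of a block upper-triangular
skew-symmetric pencil is `{(0, 0, y) : (Axy + λ Bxy) y = 0}`. -/
theorem kernel_of_block_upper_triangular_pencil
    (p s t : ℕ)
    (Axx Bxx : Matrix (Fin p) (Fin p) ℂ)
    (Axs Bxs : Matrix (Fin p) (Fin s) ℂ)
    (Axy Bxy : Matrix (Fin p) (Fin t) ℂ)
    (Ass Bss : Matrix (Fin s) (Fin s) ℂ)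
    (hAxx : Axxᵀ = -Axx) (hBxx : Bxxᵀ = -Bxx)
    (hAss : Assᵀ = -Ass) (hBss : Bssᵀ = -Bss) :
    ∀ lam : ℂ,
      (∀ u : Fin p → ℂ, (Axy + lam • Bxy)ᵀ.mulVec u = 0 → u = 0) →
      IsUnit (Ass + lam • Bss).det →
      {w : (Fin p ⊕ (Fin s ⊕ Fin t)) → ℂ |
          (triMat Axx Axs Axy Ass + lam • triMat Bxx Bxs Bxy Bss).mulVec w = 0} =
        {w : (Fin p ⊕ (Fin s ⊕ Fin t)) → ℂ |
          (∀ i : Fin p, w (Sum.inl i) = 0) ∧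
          (∀ i : Fin s, w (Sum.inr (Sum.inl i)) = 0) ∧
          (Axy + lam • Bxy).mulVec (fun i => w (Sum.inr (Sum.inr i))) = 0} := by
  intro lam hinj hdet
  set Cxx := Axx + lam • Bxx
  set Cxs := Axs + lam • Bxs
  set Cxy := Axy + lam • Bxy
  set Css := Ass + lam • Bss
  rw [triMat_add_smul]
  ext w
  simp only [Set.mem_setOf_eq]
  set u : Fin p → ℂ := fun i => w (Sum.inl i) with hu
  set v : Fin s → ℂ := fun i => w (Sum.inr (Sum.inl i)) with hv
  set y : Fin t → ℂ := fun i => w (Sum.inr (Sum.inr i)) with hy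
  have hw : w = Sum.elim u (Sum.elim v y) := by
    funext i; rcases i with i | i | i <;> rfl
  rw [hw]
  have hmv : (triMat Cxx Cxs Cxy Css).mulVec (Sum.elim u (Sum.elim v y)) =
      Sum.elim (Cxx.mulVec u + (Cxs.mulVec v + Cxy.mulVec y))
        (Sum.elim ((-Cxsᵀ).mulVec u + Css.mulVec v) ((-Cxyᵀ).mulVec u)) := by
    rw [triMat, fromBlocks_mulVec]
    simp [fromCols_mulVec_sumElim, fromBlocks_mulVec, fromRows_mulVec, Sum.elim_comp_inl,
      Sum.elim_comp_inr]
    funext i; rcases i with i | i | i <;> simp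
  rw [hmv]
  constructor
  · intro h
    have h1 : Cxx.mulVec u + (Cxs.mulVec v + Cxy.mulVec y) = 0 := by
      funext i; exact congrFun h (Sum.inl i)
    have h2 : (-Cxsᵀ).mulVec u + Css.mulVec v = 0 := by
      funext i; exact congrFun h (Sum.inr (Sum.inl i))
    have h3 : (-Cxyᵀ).mulVec u = 0 := by
      funext i; exact congrFun h (Sum.inr (Sum.inr i))
    have hu0 : u = 0 := by
      apply hinj
      have := congrArg Neg.neg h3
      simpa [neg_mulVec] using this
    have hv0 : v = 0 := by
      have hCss : Css.mulVec v = 0 := by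
        rw [hu0] at h2; simpa using h2
      have hinjC := Matrix.mulVec_injective_iff_isUnit.2 ((Matrix.isUnit_iff_isUnit_det Css).2 hdet)
      have : Css.mulVec v = Css.mulVec 0 := by simpa using hCss
      exact hinjC this
    have hy0 : Cxy.mulVec y = 0 := by
      rw [hu0, hv0] at h1; simpa using h1
    refine ⟨fun i => congrFun hu0 i, fun i => congrFun hv0 i, ?_⟩
    simpa using hy0
  · rintro ⟨h1, h2, h3⟩
    have hu0 : u = 0 := funext h1
    have hv0 : v = 0 := funext h2
    have hy0 : Cxy.mulVec y = 0 := h3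
    rw [hu0, hv0]
    funext i
    rcases i with i | i | i <;> simp [hy0]

end
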